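/- (Multi-source outer bound, Theorem 3.) Every achievable point (μ_Ω, R_K) lies in R_o, and R_o ⊆ R_o'. Here R_o is the set of points (μ_Ω, R_K) for which there exist finitely supported random variables U_1, …, U_K, jointly distributed with X_1, …, X_K, such that for every subset S ⊆ {1,…,K} the Markov chain U_S–X_S–X_{{1,…,K}} holds (U_S is conditionally independent of (X_1,…,X_K) given X_S), R_k ≥ I(U_k; X_k) for every k, and μ_{A,B} ≤ I(U_A; X_A) + I(U_B; X_B) − I((U_A, U_B); (X_A, X_B)) for every (A, B) ∈ Ω; R_o' is defined the same way except that the last constraint is replaced by μ_{A,B} ≤ I(U_A; X_B) for every (A, B) ∈ Ω. -/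

import Mathlib

open scoped BigOperators Classical

namespace Biclustering

variable {α β γ σ : Type*}

/-- A probability mass function on a finite type. -/
def IsPMF [Fintype α] (p : α → ℝ) : Prop := (∀ a, 0 ≤ p a) ∧ ∑ a, p a = 1

/-- Shannon entropy (in nats) of a pmf on a finite type. -/
noncomputable def ent [Fintype α] (p : α → ℝ) : ℝ := - ∑ a, p a * Real.log (p a)

/-- Pushforward (distribution of `f` under `p`). -/
noncomputable def pmap [Fintype α] (f : α → β) (p : α → ℝ) : β → ℝ :=
  fun b => ∑ a, if f a = b then p a else 0

/-- Entropy of the random variable `f` under the joint pmf `p`. -/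
noncomputable def Hof [Fintype α] [Fintype β] (p : α → ℝ) (f : α → β) : ℝ := ent (pmap f p)

/-- Mutual information `I(f; g)` under the joint pmf `p`. -/
noncomputable def MI [Fintype α] [Fintype β] [Fintype γ] (p : α → ℝ) (f : α → β) (g : α → γ) : ℝ :=
  Hof p f + Hof p g - Hof p (fun a => (f a, g a))

/-- Conditional mutual information `I(f; g | m)` under the joint pmf `p`. -/
noncomputable def CMI [Fintype α] [Fintype β] [Fintype γ] [Fintype σ]
    (p : α → ℝ) (f : α → β) (g : α → γ) (m : α → σ) : ℝ :=
  Hof p (fun a => (f a, m a)) + Hof p (fun a => (g a, m a))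
    - Hof p (fun a => (f a, g a, m a)) - Hof p m

/-- `f` and `g` are conditionally independent given `m` (a Markov chain `f – m – g`). -/
def CondIndep [Fintype α] (p : α → ℝ) (f : α → β) (g : α → γ) (m : α → σ) : Prop :=
  ∀ b c s, pmap (fun a => (f a, g a, m a)) p (b, c, s) * pmap m p s
    = pmap (fun a => (f a, m a)) p (b, s) * pmap (fun a => (g a, m a)) p (c, s)

/-- The pmf of `n` i.i.d. copies of a source with pmf `p`. -/
noncomputable def iid [Fintype α] (n : ℕ) (p : α → ℝ) : (Fin n → α) → ℝ :=
  fun x => ∏ i, p (x i)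

/-- The index set `Ω`: pairs of nonempty disjoint subsets of `{1, …, K}`. -/
def Omega (K : ℕ) : Type :=
  {AB : Finset (Fin K) × Finset (Fin K) // AB.1.Nonempty ∧ AB.2.Nonempty ∧ Disjoint AB.1 AB.2}

variable {K : ℕ}

/-- Restriction of a tuple to the coordinates in a subset `A`. -/
def restr {𝒯 : Fin K → Type} (A : Finset (Fin K)) (x : ∀ k, 𝒯 k) :
    ∀ k : {k // k ∈ A}, 𝒯 k.1 :=
  fun k => x k.1

variable {𝒳 : Fin K → Type} [∀ k, Fintype (𝒳 k)]

/-- `(μ_Ω, R_K)` is achievable for the multi-source biclustering problem with source pmf `p`. -/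
def AchievableM (p : (∀ k, 𝒳 k) → ℝ) (μ : Omega K → ℝ) (R : Fin K → ℝ) : Prop :=
  ∃ (n : ℕ) (M : Fin K → ℕ) (f : ∀ k, (Fin n → 𝒳 k) → Fin (M k)),
    0 < n ∧ (∀ k, Real.log (M k) ≤ n * R k) ∧
    ∀ AB : Omega K,
      μ AB ≤ (MI (iid n p)
        (fun ω => fun k : {k // k ∈ AB.1.1} => f k.1 (fun i => ω i k.1))
        (fun ω => fun k : {k // k ∈ AB.1.2} => f k.1 (fun i => ω i k.1))) / n

/-- The rate constraints and the Markov structure common to `R_o` and `R_o'`: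
`q` is a joint pmf of `(U_1, …, U_K, X_1, …, X_K)` with `X`-marginal `p` such that
`U_S – X_S – X_{{1,…,K}}` is a Markov chain for every `S ⊆ {1,…,K}`. -/
def OuterWitnessM {𝒰 : Fin K → Type} [∀ k, Fintype (𝒰 k)]
    (p : (∀ k, 𝒳 k) → ℝ) (q : ((∀ k, 𝒰 k) × (∀ k, 𝒳 k)) → ℝ) : Prop :=
  IsPMF q ∧ pmap Prod.snd q = p ∧
    ∀ S : Finset (Fin K),
      CondIndep q (fun w => restr S w.1) (fun w => w.2) (fun w => restr S w.2)

/-- The multi-source outer-bound region `R_o`. -/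
def RoM (p : (∀ k, 𝒳 k) → ℝ) : Set ((Omega K → ℝ) × (Fin K → ℝ)) :=
  { t | ∃ (𝒰 : Fin K → Type) (_ : ∀ k, Fintype (𝒰 k))
      (q : ((∀ k, 𝒰 k) × (∀ k, 𝒳 k)) → ℝ),
      OuterWitnessM p q ∧
      (∀ k, MI q (fun w => w.1 k) (fun w => w.2 k) ≤ t.2 k) ∧
      ∀ AB : Omega K, t.1 AB ≤
        MI q (fun w => restr AB.1.1 w.1) (fun w => restr AB.1.1 w.2)
        + MI q (fun w => restr AB.1.2 w.1) (fun w => restr AB.1.2 w.2)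
        - MI q (fun w => (restr AB.1.1 w.1, restr AB.1.2 w.1))
            (fun w => (restr AB.1.1 w.2, restr AB.1.2 w.2)) }

/-- The multi-source outer-bound region `R_o'`. -/
def RoM' (p : (∀ k, 𝒳 k) → ℝ) : Set ((Omega K → ℝ) × (Fin K → ℝ)) :=
  { t | ∃ (𝒰 : Fin K → Type) (_ : ∀ k, Fintype (𝒰 k))
      (q : ((∀ k, 𝒰 k) × (∀ k, 𝒳 k)) → ℝ),
      OuterWitnessM p q ∧
      (∀ k, MI q (fun w => w.1 k) (fun w => w.2 k) ≤ t.2 k) ∧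
      ∀ AB : Omega K, t.1 AB ≤
        MI q (fun w => restr AB.1.1 w.1) (fun w => restr AB.1.2 w.2) }

/-! ### Toolkit -/

section Toolkit
set_option linter.unusedSectionVars false

variable [Fintype α] [Fintype β] [Fintype γ] [Fintype σ]

lemma pmap_nonneg {p : α → ℝ} (hp : ∀ a, 0 ≤ p a) (f : α → β) (b : β) :
    0 ≤ pmap f p b := by
  refine Finset.sum_nonneg fun a _ => ?_
  split <;> simp [hp a]

lemma sum_pmap (f : α → β) (p : α → ℝ) : ∑ b, pmap f p b = ∑ a, p a := by
  unfold pmap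
  rw [Finset.sum_comm]
  refine Finset.sum_congr rfl fun a _ => ?_
  simp

lemma pmap_comp (g : β → γ) (f : α → β) (p : α → ℝ) :
    pmap g (pmap f p) = pmap (fun a => g (f a)) p := by
  funext c
  unfold pmap
  have h1 : ∀ b : β, (if g b = c then (∑ a, if f a = b then p a else 0) else 0)
      = ∑ a, (if f a = b then (if g b = c then p a else 0) else 0) := by
    intro b
    split_ifs with h <;> simp [h]
  simp only [h1]
  rw [Finset.sum_comm]
  refine Finset.sum_congr rfl fun a _ => ?_
  rw [Fintype.sum_eq_single (f a)]
  · simp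
  · intro b hb
    simp [Ne.symm hb]

lemma isPMF_pmap {p : α → ℝ} (hp : IsPMF p) (f : α → β) : IsPMF (pmap f p) :=
  ⟨pmap_nonneg hp.1 f, by rw [sum_pmap, hp.2]⟩

lemma pmap_apply_injective {e : α → β} (he : Function.Injective e) (p : α → ℝ) (a : α) :
    pmap e p (e a) = p a := by
  unfold pmap
  rw [Fintype.sum_eq_single a]
  · simp
  · intro b hb
    rw [if_neg]
    exact fun h => hb (he h)

lemma pmap_eq_zero_of_not_range {e : α → β} (p : α → ℝ) {b : β}
    (hb : ∀ a, e a ≠ b) : pmap e p b = 0 := by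
  unfold pmap
  refine Finset.sum_eq_zero fun a _ => ?_
  simp [hb a]

lemma ent_pmap_of_injective {p : α → ℝ} (hp : ∀ a, 0 ≤ p a) {e : α → β}
    (he : Function.Injective e) : ent (pmap e p) = ent p := by
  unfold ent
  congr 1
  have h0 : (∑ b : β, pmap e p b * Real.log (pmap e p b))
      = ∑ b ∈ (Finset.univ : Finset α).image e, pmap e p b * Real.log (pmap e p b) := by
    refine (Finset.sum_subset (Finset.subset_univ _) ?_).symm
    intro b _ hb
    have : ∀ a, e a ≠ b := by
      intro a h; exact hb (Finset.mem_image.2 ⟨a, Finset.mem_univ a, h⟩)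
    rw [pmap_eq_zero_of_not_range p this]
    simp
  rw [h0, Finset.sum_image (fun a _ b _ h => he h)]
  refine Finset.sum_congr rfl fun a _ => ?_
  rw [pmap_apply_injective he]

lemma Hof_pair_eq_left {p : α → ℝ} (hp : ∀ a, 0 ≤ p a) (u : α → β) (v : α → γ)
    (e : β → γ) (hgood : ∀ a, e (u a) = v a) :
    Hof p (fun a => (u a, v a)) = Hof p u := by
  have : (fun a => (u a, v a)) = (fun d => (d, e d)) ∘ u := by
    funext a; simp [hgood a]
  rw [this]
  unfold Hof
  rw [show pmap ((fun d => (d, e d)) ∘ u) p = pmap (fun d => (d, e d)) (pmap u p) by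
    rw [pmap_comp]; rfl]
  exact ent_pmap_of_injective (pmap_nonneg hp u)
    (fun d d' h => congrArg Prod.fst h)

lemma Hof_congr {p : α → ℝ} (hp : ∀ a, 0 ≤ p a) {f : α → β} {g : α → γ}
    (e₁ : β → γ) (e₂ : γ → β) (h₁ : ∀ a, e₁ (f a) = g a) (h₂ : ∀ a, e₂ (g a) = f a) :
    Hof p f = Hof p g := by
  have k1 := Hof_pair_eq_left hp f g e₁ h₁
  have k2 := Hof_pair_eq_left hp g f e₂ h₂
  have swap : Hof p (fun a => (f a, g a)) = Hof p (fun a => (g a, f a)) := by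
    unfold Hof
    rw [show pmap (fun a => (g a, f a)) p
        = pmap (fun t : β × γ => (t.2, t.1)) (pmap (fun a => (f a, g a)) p) by
      rw [pmap_comp]]
    exact (ent_pmap_of_injective (pmap_nonneg hp _)
      (fun t t' h => by
        cases t; cases t'
        simpa [Prod.ext_iff, and_comm] using h)).symm
  rw [← k1, swap, k2]

end Toolkit
section Toolkit2
set_option linter.unusedSectionVars false
set_option maxHeartbeats 1000000
variable [Fintype α] [Fintype β] [Fintype γ] [Fintype σ]

lemma pmap_marg13 (f : α → β) (g : α → γ) (m : α → σ) (p : α → ℝ) (b : β) (s : σ) :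
    pmap (fun a => (f a, m a)) p (b, s) = ∑ c, pmap (fun a => (f a, g a, m a)) p (b, c, s) := by
  unfold pmap
  rw [Finset.sum_comm]
  refine Finset.sum_congr rfl fun a _ => ?_
  simp only [Prod.mk.injEq]
  rcases eq_or_ne (f a) b with hf | hf
  · rcases eq_or_ne (m a) s with hm | hm
    · simp [hf, hm]
    · simp [hm]
  · simp [hf]

lemma pmap_marg23 (f : α → β) (g : α → γ) (m : α → σ) (p : α → ℝ) (c : γ) (s : σ) :
    pmap (fun a => (g a, m a)) p (c, s) = ∑ b, pmap (fun a => (f a, g a, m a)) p (b, c, s) := by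
  unfold pmap
  rw [Finset.sum_comm]
  refine Finset.sum_congr rfl fun a _ => ?_
  simp only [Prod.mk.injEq]
  rcases eq_or_ne (g a) c with hg | hg
  · rcases eq_or_ne (m a) s with hm | hm
    · simp [hg, hm]
    · simp [hm]
  · simp [hg]

lemma pmap_marg3 (f : α → β) (g : α → γ) (m : α → σ) (p : α → ℝ) (s : σ) :
    pmap m p s = ∑ b, ∑ c, pmap (fun a => (f a, g a, m a)) p (b, c, s) := by
  have h : ∀ b, ∑ c, pmap (fun a => (f a, g a, m a)) p (b, c, s)
      = pmap (fun a => (f a, m a)) p (b, s) := fun b => (pmap_marg13 f g m p b s).symm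
  simp only [h]
  unfold pmap
  rw [Finset.sum_comm]
  refine Finset.sum_congr rfl fun a _ => ?_
  simp only [Prod.mk.injEq]
  rcases eq_or_ne (m a) s with hm | hm
  · simp [hm]
  · simp [hm]

lemma sum3_comm {F : β → γ → σ → ℝ} :
    ∑ b, ∑ c, ∑ s, F b c s = ∑ s, ∑ b, ∑ c, F b c s :=
  (Finset.sum_congr rfl fun _ _ => Finset.sum_comm).trans Finset.sum_comm

lemma sum3_split (F G H I : β → γ → σ → ℝ) :
    ∑ b, ∑ c, ∑ s, (F b c s + G b c s - H b c s - I b c s)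
      = (∑ b, ∑ c, ∑ s, F b c s) + (∑ b, ∑ c, ∑ s, G b c s)
        - (∑ b, ∑ c, ∑ s, H b c s) - (∑ b, ∑ c, ∑ s, I b c s) := by
  simp only [Finset.sum_sub_distrib, Finset.sum_add_distrib]

/-- Expansion of `CMI` as an iterated triple sum. -/
lemma CMI_expand (p : α → ℝ) (f : α → β) (g : α → γ) (m : α → σ) :
    CMI p f g m = ∑ b, ∑ c, ∑ s,
      (pmap (fun a => (f a, g a, m a)) p (b, c, s)) *
        (Real.log (pmap (fun a => (f a, g a, m a)) p (b, c, s))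
          + Real.log (∑ b', ∑ c', pmap (fun a => (f a, g a, m a)) p (b', c', s))
          - Real.log (∑ c', pmap (fun a => (f a, g a, m a)) p (b, c', s))
          - Real.log (∑ b', pmap (fun a => (f a, g a, m a)) p (b', c, s))) := by
  set r := pmap (fun a => (f a, g a, m a)) p with hr
  have hfull : Hof p (fun a => (f a, g a, m a))
      = -∑ b, ∑ c, ∑ s, r (b, c, s) * Real.log (r (b, c, s)) := by
    unfold Hof ent
    rw [← hr]
    congr 1
    rw [Fintype.sum_prod_type]
    exact Finset.sum_congr rfl fun b _ => Fintype.sum_prod_type _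
  have h13 : Hof p (fun a => (f a, m a))
      = -∑ b, ∑ c, ∑ s, r (b, c, s) * Real.log (∑ c', r (b, c', s)) := by
    unfold Hof ent
    congr 1
    rw [Fintype.sum_prod_type]
    refine Finset.sum_congr rfl fun b _ => ?_
    rw [show (∑ s, pmap (fun a => (f a, m a)) p (b, s) *
            Real.log (pmap (fun a => (f a, m a)) p (b, s)))
        = ∑ s, ∑ c, r (b, c, s) * Real.log (∑ c', r (b, c', s)) from
      Finset.sum_congr rfl fun s _ => by
        rw [pmap_marg13 f g m p b s, ← hr, Finset.sum_mul]]
    exact Finset.sum_comm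
  have h23 : Hof p (fun a => (g a, m a))
      = -∑ b, ∑ c, ∑ s, r (b, c, s) * Real.log (∑ b', r (b', c, s)) := by
    unfold Hof ent
    congr 1
    rw [Fintype.sum_prod_type]
    rw [show (∑ c, ∑ s, pmap (fun a => (g a, m a)) p (c, s) *
            Real.log (pmap (fun a => (g a, m a)) p (c, s)))
        = ∑ c, ∑ s, ∑ b, r (b, c, s) * Real.log (∑ b', r (b', c, s)) from
      Finset.sum_congr rfl fun c _ => Finset.sum_congr rfl fun s _ => by
        rw [pmap_marg23 f g m p c s, ← hr, Finset.sum_mul]]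
    rw [show (∑ c, ∑ s, ∑ b, r (b, c, s) * Real.log (∑ b', r (b', c, s)))
        = ∑ c, ∑ b, ∑ s, r (b, c, s) * Real.log (∑ b', r (b', c, s)) from
      Finset.sum_congr rfl fun c _ => Finset.sum_comm]
    exact Finset.sum_comm
  have h3 : Hof p m
      = -∑ b, ∑ c, ∑ s, r (b, c, s) * Real.log (∑ b', ∑ c', r (b', c', s)) := by
    unfold Hof ent
    congr 1
    rw [show (∑ s, pmap m p s * Real.log (pmap m p s))
        = ∑ s, ∑ b, ∑ c, r (b, c, s) * Real.log (∑ b', ∑ c', r (b', c', s)) from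
      Finset.sum_congr rfl fun s _ => by
        rw [pmap_marg3 f g m p s, ← hr, Finset.sum_mul]
        exact Finset.sum_congr rfl fun b _ => Finset.sum_mul _ _ _]
    exact sum3_comm.symm
  have expand : ∀ b c s, r (b, c, s) *
        (Real.log (r (b, c, s)) + Real.log (∑ b', ∑ c', r (b', c', s))
          - Real.log (∑ c', r (b, c', s)) - Real.log (∑ b', r (b', c, s)))
      = r (b, c, s) * Real.log (r (b, c, s))
        + r (b, c, s) * Real.log (∑ b', ∑ c', r (b', c', s))
        - r (b, c, s) * Real.log (∑ c', r (b, c', s))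
        - r (b, c, s) * Real.log (∑ b', r (b', c, s)) := fun b c s => by ring
  simp only [expand]
  rw [sum3_split]
  unfold CMI
  rw [hfull, h13, h23, h3]
  ring

lemma CMI_nonneg {p : α → ℝ} (hp : IsPMF p) (f : α → β) (g : α → γ) (m : α → σ) :
    0 ≤ CMI p f g m := by
  rw [CMI_expand p f g m]
  set r := pmap (fun a => (f a, g a, m a)) p with hr
  have hr0 : ∀ t, 0 ≤ r t := pmap_nonneg hp.1 _
  have hrsum : ∑ b, ∑ c, ∑ s, r (b, c, s) = 1 := by
    have := (isPMF_pmap hp (fun a => (f a, g a, m a))).2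
    rw [← hr] at this
    rw [← this, Fintype.sum_prod_type]
    exact Finset.sum_congr rfl fun b _ => (Fintype.sum_prod_type (fun y : γ × σ => r (b, y))).symm
  set m13 : β → σ → ℝ := fun b s => ∑ c', r (b, c', s) with hm13
  set m23 : γ → σ → ℝ := fun c s => ∑ b', r (b', c, s) with hm23
  set m3 : σ → ℝ := fun s => ∑ b', ∑ c', r (b', c', s) with hm3
  have hm13nn : ∀ b s, 0 ≤ m13 b s := fun b s => Finset.sum_nonneg fun _ _ => hr0 _
  have hm23nn : ∀ c s, 0 ≤ m23 c s := fun c s => Finset.sum_nonneg fun _ _ => hr0 _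
  have hm3nn : ∀ s, 0 ≤ m3 s := fun s =>
    Finset.sum_nonneg fun _ _ => Finset.sum_nonneg fun _ _ => hr0 _
  -- pointwise bound
  have key : ∀ b c s, r (b, c, s) - m13 b s * m23 c s / m3 s
      ≤ r (b, c, s) * (Real.log (r (b, c, s)) + Real.log (m3 s)
          - Real.log (m13 b s) - Real.log (m23 c s)) := by
    intro b c s
    rcases eq_or_lt_of_le (hr0 (b, c, s)) with h0 | hpos
    · rw [← h0]
      have hnn : 0 ≤ m13 b s * m23 c s / m3 s :=
        div_nonneg (mul_nonneg (hm13nn b s) (hm23nn c s)) (hm3nn s)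
      nlinarith [hnn]
    · have h13p : 0 < m13 b s := lt_of_lt_of_le hpos (Finset.single_le_sum
        (f := fun c' => r (b, c', s)) (fun _ _ => hr0 _) (Finset.mem_univ c))
      have h23p : 0 < m23 c s := lt_of_lt_of_le hpos (Finset.single_le_sum
        (f := fun b' => r (b', c, s)) (fun _ _ => hr0 _) (Finset.mem_univ b))
      have h3p : 0 < m3 s := lt_of_lt_of_le h13p (Finset.single_le_sum
        (f := fun b' => m13 b' s) (fun _ _ => hm13nn _ _) (Finset.mem_univ b))
      have hx : (0:ℝ) < m13 b s * m23 c s / (r (b, c, s) * m3 s) := by positivity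
      have hlog := Real.log_le_sub_one_of_pos hx
      have hlogeq : Real.log (m13 b s * m23 c s / (r (b, c, s) * m3 s))
          = Real.log (m13 b s) + Real.log (m23 c s)
            - Real.log (r (b, c, s)) - Real.log (m3 s) := by
        rw [Real.log_div (by positivity) (by positivity), Real.log_mul (ne_of_gt h13p)
          (ne_of_gt h23p), Real.log_mul (ne_of_gt hpos) (ne_of_gt h3p)]
        ring
      rw [hlogeq] at hlog
      have hmul := mul_le_mul_of_nonneg_left hlog (le_of_lt hpos)
      have hdiv : r (b, c, s) * (m13 b s * m23 c s / (r (b, c, s) * m3 s) - 1)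
          = m13 b s * m23 c s / m3 s - r (b, c, s) := by
        field_simp
      rw [hdiv] at hmul
      nlinarith [hmul]
  calc (0:ℝ) = (∑ b, ∑ c, ∑ s, r (b, c, s))
      - ∑ b, ∑ c, ∑ s, m13 b s * m23 c s / m3 s := by
        rw [hrsum]
        have : (∑ b, ∑ c, ∑ s, m13 b s * m23 c s / m3 s) = 1 := by
          rw [sum3_comm]
          have hs : ∀ s, (∑ b, ∑ c, m13 b s * m23 c s / m3 s) = m3 s := by
            intro s
            have : (∑ b, ∑ c, m13 b s * m23 c s / m3 s)
                = (∑ b, m13 b s) * (∑ c, m23 c s) / m3 s := by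
              rw [Finset.sum_mul, Finset.sum_div]
              refine Finset.sum_congr rfl fun b _ => ?_
              rw [Finset.mul_sum, Finset.sum_div]
            rw [this]
            have e1 : (∑ b, m13 b s) = m3 s := rfl
            have e2 : (∑ c, m23 c s) = m3 s := Finset.sum_comm
            rw [e1, e2]
            rcases eq_or_ne (m3 s) 0 with h | h
            · rw [h]; simp
            · field_simp
          rw [show (∑ s, ∑ b, ∑ c, m13 b s * m23 c s / m3 s) = ∑ s, m3 s from
            Finset.sum_congr rfl fun s _ => hs s]
          have : (∑ s, m3 s) = ∑ b, ∑ c, ∑ s, r (b, c, s) := sum3_comm.symm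
          rw [this, hrsum]
        rw [this]
        ring
    _ ≤ _ := by
        rw [← Finset.sum_sub_distrib]
        refine Finset.sum_le_sum fun b _ => ?_
        rw [← Finset.sum_sub_distrib]
        refine Finset.sum_le_sum fun c _ => ?_
        rw [← Finset.sum_sub_distrib]
        exact Finset.sum_le_sum fun s _ => key b c s

lemma CMI_eq_zero_of_condIndep {p : α → ℝ} (hp : IsPMF p) {f : α → β} {g : α → γ}
    {m : α → σ} (hci : CondIndep p f g m) : CMI p f g m = 0 := by
  rw [CMI_expand p f g m]
  set r := pmap (fun a => (f a, g a, m a)) p with hr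
  have hr0 : ∀ t, 0 ≤ r t := pmap_nonneg hp.1 _
  refine Finset.sum_eq_zero fun b _ => Finset.sum_eq_zero fun c _ =>
    Finset.sum_eq_zero fun s _ => ?_
  rcases eq_or_lt_of_le (hr0 (b, c, s)) with h0 | hpos
  · rw [← h0]; ring
  · have hci' := hci b c s
    rw [← hr] at hci'
    rw [← pmap_marg13 f g m p b s, ← pmap_marg23 f g m p c s,
      ← pmap_marg3 f g m p s]
    have h3p : 0 < pmap m p s := by
      rw [pmap_marg3 f g m p s, ← hr]
      refine lt_of_lt_of_le hpos ?_
      refine le_trans (Finset.single_le_sum (f := fun c' => r (b, c', s))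
        (fun _ _ => hr0 _) (Finset.mem_univ c)) ?_
      exact Finset.single_le_sum
        (f := fun b' => ∑ c', r (b', c', s))
        (fun b' _ => Finset.sum_nonneg fun _ _ => hr0 _) (Finset.mem_univ b)
    have hprod : 0 < pmap (fun a => (f a, m a)) p (b, s)
        * pmap (fun a => (g a, m a)) p (c, s) := by
      rw [← hci']
      exact mul_pos hpos h3p
    have h13p : 0 < pmap (fun a => (f a, m a)) p (b, s) :=
      lt_of_le_of_ne (pmap_nonneg hp.1 _ _) (by
        intro h
        rw [← h] at hprod
        simpa using hprod.ne')
    have h23p : 0 < pmap (fun a => (g a, m a)) p (c, s) := by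
      by_contra hcon
      push_neg at hcon
      have : pmap (fun a => (g a, m a)) p (c, s) = 0 :=
        le_antisymm hcon (pmap_nonneg hp.1 _ _)
      rw [this, mul_zero] at hprod
      exact lt_irrefl 0 hprod
    have hlogs : Real.log (r (b, c, s)) + Real.log (pmap m p s)
        = Real.log (pmap (fun a => (f a, m a)) p (b, s))
          + Real.log (pmap (fun a => (g a, m a)) p (c, s)) := by
      rw [← Real.log_mul (ne_of_gt hpos) (ne_of_gt h3p),
        ← Real.log_mul (ne_of_gt h13p) (ne_of_gt h23p), hci']
    rw [show Real.log (r (b, c, s)) + Real.log (pmap m p s)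
        - Real.log (pmap (fun a => (f a, m a)) p (b, s))
        - Real.log (pmap (fun a => (g a, m a)) p (c, s)) = 0 from by
      rw [hlogs]; ring]
    ring

end Toolkit2
section Toolkit3
set_option linter.unusedSectionVars false
set_option maxHeartbeats 1000000
variable {δ ε : Type*}
variable [Fintype α] [Fintype β] [Fintype γ] [Fintype σ] [Fintype δ] [Fintype ε]

lemma MI_congr_right {p : α → ℝ} (hp : ∀ a, 0 ≤ p a) (f : α → β) {g : α → γ} {g' : α → δ}
    (e₁ : γ → δ) (e₂ : δ → γ) (h₁ : ∀ a, e₁ (g a) = g' a) (h₂ : ∀ a, e₂ (g' a) = g a) :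
    MI p f g = MI p f g' := by
  unfold MI
  have hg : Hof p g = Hof p g' := Hof_congr hp e₁ e₂ h₁ h₂
  have hfg : Hof p (fun a => (f a, g a)) = Hof p (fun a => (f a, g' a)) :=
    Hof_congr hp (fun t => (t.1, e₁ t.2)) (fun t => (t.1, e₂ t.2))
      (fun a => by simp [h₁ a]) (fun a => by simp [h₂ a])
  rw [hg, hfg]

lemma MI_congr_left {p : α → ℝ} (hp : ∀ a, 0 ≤ p a) {f : α → β} {f' : α → δ} (g : α → γ)
    (e₁ : β → δ) (e₂ : δ → β) (h₁ : ∀ a, e₁ (f a) = f' a) (h₂ : ∀ a, e₂ (f' a) = f a) :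
    MI p f g = MI p f' g := by
  unfold MI
  have hf : Hof p f = Hof p f' := Hof_congr hp e₁ e₂ h₁ h₂
  have hfg : Hof p (fun a => (f a, g a)) = Hof p (fun a => (f' a, g a)) :=
    Hof_congr hp (fun t => (e₁ t.1, t.2)) (fun t => (e₂ t.1, t.2))
      (fun a => by simp [h₁ a]) (fun a => by simp [h₂ a])
  rw [hf, hfg]

lemma MI_comm {p : α → ℝ} (hp : ∀ a, 0 ≤ p a) (f : α → β) (g : α → γ) :
    MI p f g = MI p g f := by
  unfold MI
  have h : Hof p (fun a => (f a, g a)) = Hof p (fun a => (g a, f a)) :=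
    Hof_congr hp (fun t => (t.2, t.1)) (fun t => (t.2, t.1))
      (fun a => rfl) (fun a => rfl)
  rw [h]
  ring

lemma MI_chain (p : α → ℝ) (f : α → β) (g : α → γ) (m : α → σ) :
    MI p f (fun a => (g a, m a)) = MI p f m + CMI p f g m := by
  simp only [MI, CMI]
  ring

lemma CMI_chain {p : α → ℝ} (hp : ∀ a, 0 ≤ p a) (f₁ : α → β) (f₂ : α → δ)
    (g : α → γ) (m : α → σ) :
    CMI p (fun a => (f₁ a, f₂ a)) g m
      = CMI p f₂ g m + CMI p f₁ g (fun a => (f₂ a, m a)) := by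
  have hA : Hof p (fun a => ((f₁ a, f₂ a), m a)) = Hof p (fun a => (f₁ a, f₂ a, m a)) :=
    Hof_congr hp (fun t => (t.1.1, t.1.2, t.2)) (fun t => ((t.1, t.2.1), t.2.2))
      (fun a => rfl) (fun a => rfl)
  have hB : Hof p (fun a => ((f₁ a, f₂ a), g a, m a))
      = Hof p (fun a => (f₁ a, g a, f₂ a, m a)) :=
    Hof_congr hp (fun t => (t.1.1, t.2.1, t.1.2, t.2.2))
      (fun t => ((t.1, t.2.2.1), t.2.1, t.2.2.2)) (fun a => rfl) (fun a => rfl)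
  have hC : Hof p (fun a => (g a, f₂ a, m a)) = Hof p (fun a => (f₂ a, g a, m a)) :=
    Hof_congr hp (fun t => (t.2.1, t.1, t.2.2)) (fun t => (t.2.1, t.1, t.2.2))
      (fun a => rfl) (fun a => rfl)
  simp only [CMI]
  rw [hA, hB, ← hC]
  ring

lemma MI_comp_right_le {p : α → ℝ} (hp : IsPMF p) (f : α → β) (g : α → γ) (h : γ → δ) :
    MI p f (fun a => h (g a)) ≤ MI p f g := by
  have h1 : MI p f g = MI p f (fun a => (g a, h (g a))) :=
    MI_congr_right hp.1 f (fun c => (c, h c)) Prod.fst (fun a => rfl) (fun a => rfl)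
  have h2 : MI p f (fun a => (g a, h (g a)))
      = MI p f (fun a => h (g a)) + CMI p f g (fun a => h (g a)) :=
    MI_chain p f g (fun a => h (g a))
  linarith [CMI_nonneg hp f g (fun a => h (g a))]

lemma outer_pair_bound {p : α → ℝ} (hp : IsPMF p) (F : α → β) (G : α → γ) (X : α → σ)
    (hA : σ → δ) (hB : σ → ε)
    (hM : CondIndep p F X (fun a => hA (X a))) :
    MI p F (fun a => hA (X a)) + MI p G (fun a => hB (X a))
      - MI p (fun a => (F a, G a)) (fun a => (hA (X a), hB (X a)))
      ≤ MI p F (fun a => hB (X a)) := by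
  have hFXY : MI p F X = MI p F (fun a => hA (X a)) := by
    have e1 : MI p F X = MI p F (fun a => (X a, hA (X a))) :=
      MI_congr_right hp.1 F (fun x => (x, hA x)) Prod.fst (fun a => rfl) (fun a => rfl)
    have e2 : MI p F (fun a => (X a, hA (X a)))
        = MI p F (fun a => hA (X a)) + CMI p F X (fun a => hA (X a)) :=
      MI_chain p F X (fun a => hA (X a))
    have e3 : CMI p F X (fun a => hA (X a)) = 0 := CMI_eq_zero_of_condIndep hp hM
    linarith
  have hYZ_le : MI p F (fun a => (hA (X a), hB (X a))) ≤ MI p F X :=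
    MI_comp_right_le hp F X (fun x => (hA x, hB x))
  have hY_le : MI p F (fun a => hA (X a)) ≤ MI p F (fun a => (hA (X a), hB (X a))) :=
    MI_comp_right_le hp F (fun a => (hA (X a), hB (X a))) Prod.fst
  have c4 : MI p (fun a => (F a, G a)) (fun a => (hA (X a), hB (X a)))
      = MI p (fun a => (hA (X a), hB (X a))) (fun a => (F a, G a)) :=
    MI_comm hp.1 _ _
  have c4' : MI p (fun a => (hA (X a), hB (X a))) (fun a => (F a, G a))
      = MI p (fun a => (hA (X a), hB (X a))) (fun a => (G a, F a)) :=
    MI_congr_right hp.1 _ (fun t => (t.2, t.1)) (fun t => (t.2, t.1))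
      (fun a => rfl) (fun a => rfl)
  have c3 : MI p (fun a => (hA (X a), hB (X a))) (fun a => (G a, F a))
      = MI p (fun a => (hA (X a), hB (X a))) F
        + CMI p (fun a => (hA (X a), hB (X a))) G F :=
    MI_chain p _ G F
  have c5 : CMI p (fun a => (hA (X a), hB (X a))) G F
      = CMI p (fun a => hB (X a)) G F
        + CMI p (fun a => hA (X a)) G (fun a => (hB (X a), F a)) :=
    CMI_chain hp.1 _ _ G F
  have c5b : 0 ≤ CMI p (fun a => hA (X a)) G (fun a => (hB (X a), F a)) :=
    CMI_nonneg hp _ G _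
  have c6 : MI p (fun a => (hA (X a), hB (X a))) F
      = MI p F (fun a => (hA (X a), hB (X a))) := MI_comm hp.1 _ F
  have c7 : MI p (fun a => hB (X a)) (fun a => (G a, F a))
      = MI p (fun a => hB (X a)) F + CMI p (fun a => hB (X a)) G F :=
    MI_chain p _ G F
  have c8 : MI p (fun a => hB (X a)) (fun a => (F a, G a))
      = MI p (fun a => hB (X a)) G + CMI p (fun a => hB (X a)) F G :=
    MI_chain p _ F G
  have c9 : MI p (fun a => hB (X a)) (fun a => (G a, F a))
      = MI p (fun a => hB (X a)) (fun a => (F a, G a)) :=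
    MI_congr_right hp.1 _ (fun t => (t.2, t.1)) (fun t => (t.2, t.1))
      (fun a => rfl) (fun a => rfl)
  have c10 : MI p G (fun a => hB (X a)) = MI p (fun a => hB (X a)) G := MI_comm hp.1 G _
  have c11 : MI p F (fun a => hB (X a)) = MI p (fun a => hB (X a)) F := MI_comm hp.1 F _
  have c12 : 0 ≤ CMI p (fun a => hB (X a)) F G := CMI_nonneg hp _ F G
  linarith

end Toolkit3
lemma RoM_subset_RoM' (p : (∀ k, 𝒳 k) → ℝ) : RoM p ⊆ RoM' p := by
  intro t ht
  obtain ⟨𝒰, inst, q, hOW, hrate, hmu⟩ := ht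
  refine ⟨𝒰, inst, q, hOW, hrate, fun AB => ?_⟩
  refine le_trans (hmu AB) ?_
  exact outer_pair_bound hOW.1 (fun w => restr AB.1.1 w.1) (fun w => restr AB.1.2 w.1)
    (fun w => w.2) (restr AB.1.1) (restr AB.1.2) (hOW.2.2 AB.1.1)
section Toolkit5
set_option linter.unusedSectionVars false
set_option maxHeartbeats 1000000
variable {δ ε : Type*}
variable [Fintype α] [Fintype β] [Fintype γ] [Fintype σ] [Fintype δ] [Fintype ε]

lemma iid_nonneg {p : α → ℝ} (hp : ∀ a, 0 ≤ p a) (n : ℕ) (x : Fin n → α) :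
    0 ≤ iid n p x := Finset.prod_nonneg fun i _ => hp (x i)

lemma sum_fun_prod (n : ℕ) (g : Fin n → α → ℝ) :
    ∑ x : Fin n → α, ∏ i, g i (x i) = ∏ i, ∑ a, g i a := by
  rw [Finset.prod_univ_sum (fun _ => Finset.univ) g, Fintype.piFinset_univ]

lemma sum_iid (n : ℕ) (p : α → ℝ) : ∑ x : Fin n → α, iid n p x = (∑ a, p a) ^ n := by
  unfold iid
  rw [sum_fun_prod n (fun _ a => p a), Finset.prod_const, Finset.card_univ,
    Fintype.card_fin]

lemma isPMF_iid {p : α → ℝ} (hp : IsPMF p) (n : ℕ) : IsPMF (iid n p) :=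
  ⟨iid_nonneg hp.1 n, by rw [sum_iid, hp.2, one_pow]⟩

lemma pmap_letter {p : α → ℝ} (hp : IsPMF p) {n : ℕ} (j : Fin n) :
    pmap (fun x : Fin n → α => x j) (iid n p) = p := by
  funext c
  unfold pmap iid
  have hconv : ∀ x : Fin n → α,
      (if x j = c then ∏ i, p (x i) else 0)
        = ∏ i, (if i = j then (if x i = c then p (x i) else 0) else p (x i)) := by
    intro x
    rcases eq_or_ne (x j) c with hx | hx
    · rw [if_pos hx]
      refine Finset.prod_congr rfl fun i _ => ?_
      rcases eq_or_ne i j with hi | hi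
      · subst hi; simp [hx]
      · simp [hi]
    · rw [if_neg hx]
      refine (Finset.prod_eq_zero (Finset.mem_univ j) ?_).symm
      simp [hx]
  simp only [hconv]
  refine Eq.trans (sum_fun_prod n
    (fun i a => if i = j then (if a = c then p a else 0) else p a)) ?_
  rw [Fintype.prod_eq_single j]
  · simp
  · intro i hi
    simp [hi, hp.2]

lemma pmap_letter_map {p : α → ℝ} (hp : IsPMF p) {n : ℕ} (j : Fin n) (h : α → ε) :
    pmap (fun x : Fin n → α => h (x j)) (iid n p) = pmap h p := by
  rw [show (fun x : Fin n → α => h (x j)) = (fun x : Fin n → α => h ((fun y : Fin n → α => y j) x)) from rfl,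
    ← pmap_comp h (fun x : Fin n → α => x j), pmap_letter hp j]

lemma pmap_iid_map (n : ℕ) (p : α → ℝ) (π : α → δ) :
    pmap (fun x : Fin n → α => fun i => π (x i)) (iid n p) = iid n (pmap π p) := by
  funext y
  have hR : iid n (pmap π p) y
      = ∑ x : Fin n → α, ∏ i, (if π (x i) = y i then p (x i) else 0) := by
    refine Eq.trans ?_ (sum_fun_prod n (fun i a => if π a = y i then p a else 0)).symm
    rfl
  rw [hR]
  unfold pmap iid
  refine Finset.sum_congr rfl fun x _ => ?_
  split_ifs with hxy
  · exact Finset.prod_congr rfl fun i _ => (if_pos (congrFun hxy i)).symm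
  · obtain ⟨i, hi⟩ : ∃ i, π (x i) ≠ y i := by
      by_contra hcon
      push_neg at hcon
      exact hxy (funext hcon)
    exact (Finset.prod_eq_zero (Finset.mem_univ i) (by rw [if_neg hi] : _ = (0:ℝ))).symm

lemma ent_iid {p : α → ℝ} (hp : IsPMF p) (n : ℕ) : ent (iid n p) = n * ent p := by
  unfold ent iid
  have hstep : ∀ x : Fin n → α,
      (∏ i, p (x i)) * Real.log (∏ i, p (x i))
        = ∑ i, ∏ j, (if j = i then p (x j) * Real.log (p (x j)) else p (x j)) := by
    intro x
    by_cases hz : ∃ i, p (x i) = 0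
    · obtain ⟨i0, hi0⟩ := hz
      rw [Finset.prod_eq_zero (Finset.mem_univ i0) hi0, zero_mul]
      refine (Finset.sum_eq_zero fun i _ => ?_).symm
      refine Finset.prod_eq_zero (Finset.mem_univ i0) ?_
      rcases eq_or_ne i0 i with h | h
      · subst h; rw [if_pos rfl, hi0, zero_mul]
      · rw [if_neg h]; exact hi0
    · push_neg at hz
      rw [Real.log_prod (fun i _ => hz i), Finset.mul_sum]
      refine Finset.sum_congr rfl fun i _ => ?_
      have hsplit : ∀ g : Fin n → ℝ, ∏ j, g j = (∏ j ∈ Finset.univ.erase i, g j) * g i :=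
        fun g => (Finset.prod_erase_mul Finset.univ g (Finset.mem_univ i)).symm
      rw [hsplit (fun j => if j = i then p (x j) * Real.log (p (x j)) else p (x j)),
        hsplit (fun j => p (x j))]
      have : ∀ j ∈ Finset.univ.erase i,
          (if j = i then p (x j) * Real.log (p (x j)) else p (x j)) = p (x j) := by
        intro j hj
        rw [if_neg (Finset.ne_of_mem_erase hj)]
      rw [Finset.prod_congr rfl this]
      have hii : (if i = i then p (x i) * Real.log (p (x i)) else p (x i))
          = p (x i) * Real.log (p (x i)) := if_pos rfl
      rw [hii]
      ring
  simp only [hstep]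
  rw [Finset.sum_comm]
  have hper : ∀ i : Fin n,
      (∑ x : Fin n → α, ∏ j, (if j = i then p (x j) * Real.log (p (x j)) else p (x j)))
        = ∑ a, p a * Real.log (p a) := by
    intro i
    refine Eq.trans (sum_fun_prod n
      (fun j a => if j = i then p a * Real.log (p a) else p a)) ?_
    rw [Fintype.prod_eq_single i]
    · simp
    · intro j hj
      simp [hj, hp.2]
  rw [show (∑ i : Fin n, ∑ x : Fin n → α,
        ∏ j, (if j = i then p (x j) * Real.log (p (x j)) else p (x j)))
      = ∑ i : Fin n, ∑ a, p a * Real.log (p a) from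
    Finset.sum_congr rfl fun i _ => hper i]
  simp [mul_comm]

lemma ent_le_log_card {p : β → ℝ} (hp : IsPMF p) [Nonempty β] :
    ent p ≤ Real.log (Fintype.card β) := by
  have hN : (0:ℝ) < (Fintype.card β : ℝ) := by exact_mod_cast Fintype.card_pos
  have key : ∀ b, -(p b * Real.log (p b))
      ≤ (Fintype.card β : ℝ)⁻¹ - p b + p b * Real.log (Fintype.card β) := by
    intro b
    rcases eq_or_lt_of_le (hp.1 b) with h0 | hpos
    · rw [← h0]
      have : (0:ℝ) ≤ (Fintype.card β : ℝ)⁻¹ := by positivity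
      simpa using this
    · have hx : (0:ℝ) < ((Fintype.card β : ℝ) * p b)⁻¹ := by positivity
      have hlog := Real.log_le_sub_one_of_pos hx
      rw [Real.log_inv, Real.log_mul (ne_of_gt hN) (ne_of_gt hpos)] at hlog
      have h2 := mul_le_mul_of_nonneg_left hlog (le_of_lt hpos)
      have heq : p b * ((Fintype.card β : ℝ) * p b)⁻¹ = (Fintype.card β : ℝ)⁻¹ := by
        rw [mul_inv, ← mul_assoc, mul_comm (p b), mul_assoc,
          mul_inv_cancel₀ (ne_of_gt hpos), mul_one]
      nlinarith [h2, heq]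
  have hsum := Finset.sum_le_sum (fun b (_ : b ∈ Finset.univ) => key b)
  have hL : ∑ b, -(p b * Real.log (p b)) = ent p := by
    unfold ent
    rw [← Finset.sum_neg_distrib]
  have hR : ∑ b, ((Fintype.card β : ℝ)⁻¹ - p b + p b * Real.log (Fintype.card β))
      = Real.log (Fintype.card β) := by
    rw [Finset.sum_add_distrib, Finset.sum_sub_distrib, ← Finset.sum_mul, hp.2]
    simp only [Finset.sum_const, Finset.card_univ, nsmul_eq_mul]
    rw [mul_inv_cancel₀ (ne_of_gt hN)]
    ring
  rw [hL, hR] at hsum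
  exact hsum

end Toolkit5
/-- Truncated (censored) history of a sequence. -/
def trunc {n : ℕ} {δ : Type*} (m : ℕ) (y : Fin n → δ) : Fin n → Option δ :=
  fun i => if (i : ℕ) < m then some (y i) else none

section Toolkit6
set_option linter.unusedSectionVars false
set_option maxHeartbeats 1000000
variable {δ ε : Type*}
variable [Fintype α] [Fintype β] [Fintype γ] [Fintype δ] [Fintype ε]

lemma isPMF_mix {n : ℕ} (hn : 0 < n) {p : α → ℝ} (hp : IsPMF p) :
    IsPMF (fun w : Fin n × (Fin n → α) => (n:ℝ)⁻¹ * iid n p w.2) := by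
  have hn' : ((n:ℝ)) ≠ 0 := Nat.cast_ne_zero.2 hn.ne'
  constructor
  · intro w
    have := iid_nonneg hp.1 n w.2
    positivity
  · rw [Fintype.sum_prod_type]
    rw [show (∑ j : Fin n, ∑ x : Fin n → α, (n:ℝ)⁻¹ * iid n p x)
        = ∑ j : Fin n, (n:ℝ)⁻¹ from Finset.sum_congr rfl fun j _ => by
      rw [← Finset.mul_sum, sum_iid, hp.2, one_pow, mul_one]]
    simp only [Finset.sum_const, Finset.card_univ, Fintype.card_fin, nsmul_eq_mul]
    rw [mul_inv_cancel₀ hn']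

lemma pmap_mix {n : ℕ} (p : α → ℝ) (g : Fin n → (Fin n → α) → ε) (e : ε) :
    pmap (fun w : Fin n × (Fin n → α) => g w.1 w.2)
        (fun w => (n:ℝ)⁻¹ * iid n p w.2) e
      = ∑ j, (n:ℝ)⁻¹ * pmap (g j) (iid n p) e := by
  unfold pmap
  rw [Fintype.sum_prod_type]
  refine Finset.sum_congr rfl fun j _ => ?_
  rw [Finset.mul_sum]
  refine Finset.sum_congr rfl fun x _ => ?_
  rw [mul_ite, mul_zero]

lemma pmap_mix_snd {n : ℕ} (hn : 0 < n) {p : α → ℝ} (hp : IsPMF p) (h : α → ε) :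
    pmap (fun w : Fin n × (Fin n → α) => h (w.2 w.1))
      (fun w => (n:ℝ)⁻¹ * iid n p w.2) = pmap h p := by
  have hn' : ((n:ℝ)) ≠ 0 := Nat.cast_ne_zero.2 hn.ne'
  funext c
  refine Eq.trans (pmap_mix p (fun j x => h (x j)) c) ?_
  rw [show (∑ j : Fin n, (n:ℝ)⁻¹ * pmap (fun x : Fin n → α => h (x j)) (iid n p) c)
      = ∑ j : Fin n, (n:ℝ)⁻¹ * pmap h p c from Finset.sum_congr rfl fun j _ => by
    rw [pmap_letter_map hp j h]]
  simp only [Finset.sum_const, Finset.card_univ, Fintype.card_fin, nsmul_eq_mul]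
  rw [← mul_assoc, mul_inv_cancel₀ hn', one_mul]

/-- Entropy of a uniform-index mixture with exposed index. -/
lemma Hof_mix {n : ℕ} (hn : 0 < n) {p : α → ℝ} (hp : IsPMF p)
    (G : Fin n → (Fin n → α) → β) :
    Hof (fun w : Fin n × (Fin n → α) => (n:ℝ)⁻¹ * iid n p w.2)
        (fun w => (w.1, G w.1 w.2))
      = Real.log n + (n:ℝ)⁻¹ * ∑ j, Hof (iid n p) (G j) := by
  have hn' : ((n:ℝ)) ≠ 0 := Nat.cast_ne_zero.2 hn.ne'
  have hval : ∀ t : Fin n × β,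
      pmap (fun w : Fin n × (Fin n → α) => (w.1, G w.1 w.2))
        (fun w => (n:ℝ)⁻¹ * iid n p w.2) t
      = (n:ℝ)⁻¹ * pmap (G t.1) (iid n p) t.2 := by
    rintro ⟨j, b⟩
    refine Eq.trans (pmap_mix p (fun j' x => (j', G j' x)) (j, b)) ?_
    rw [Fintype.sum_eq_single j]
    · congr 1
      rw [show pmap (fun x : Fin n → α => (j, G j x)) (iid n p)
          = pmap (fun c : β => (j, c)) (pmap (G j) (iid n p)) from (pmap_comp _ _ _).symm]
      exact pmap_apply_injective (fun c c' hcc => congrArg Prod.snd hcc) _ b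
    · intro j' hj'
      rw [pmap_eq_zero_of_not_range, mul_zero]
      intro x hx
      exact hj' (congrArg Prod.fst hx)
  unfold Hof
  rw [show pmap (fun w : Fin n × (Fin n → α) => (w.1, G w.1 w.2))
        (fun w => (n:ℝ)⁻¹ * iid n p w.2)
      = fun t : Fin n × β => (n:ℝ)⁻¹ * pmap (G t.1) (iid n p) t.2 from funext hval]
  unfold ent
  rw [Fintype.sum_prod_type]
  have hterm : ∀ (j : Fin n) (b : β),
      ((n:ℝ)⁻¹ * pmap (G j) (iid n p) b) * Real.log ((n:ℝ)⁻¹ * pmap (G j) (iid n p) b)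
      = (n:ℝ)⁻¹ * (pmap (G j) (iid n p) b * Real.log (pmap (G j) (iid n p) b))
        + pmap (G j) (iid n p) b * ((n:ℝ)⁻¹ * Real.log (n:ℝ)⁻¹) := by
    intro j b
    rcases eq_or_ne (pmap (G j) (iid n p) b) 0 with h | h
    · rw [h]
      ring_nf
    · rw [Real.log_mul (inv_ne_zero hn') h]
      ring
  have hline : ∀ j : Fin n,
      (∑ b, ((n:ℝ)⁻¹ * pmap (G j) (iid n p) b)
          * Real.log ((n:ℝ)⁻¹ * pmap (G j) (iid n p) b))
      = (n:ℝ)⁻¹ * (∑ b, pmap (G j) (iid n p) b * Real.log (pmap (G j) (iid n p) b))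
        + (n:ℝ)⁻¹ * Real.log (n:ℝ)⁻¹ := by
    intro j
    rw [show (∑ b, ((n:ℝ)⁻¹ * pmap (G j) (iid n p) b)
          * Real.log ((n:ℝ)⁻¹ * pmap (G j) (iid n p) b))
        = ∑ b, ((n:ℝ)⁻¹ * (pmap (G j) (iid n p) b * Real.log (pmap (G j) (iid n p) b))
          + pmap (G j) (iid n p) b * ((n:ℝ)⁻¹ * Real.log (n:ℝ)⁻¹)) from
      Finset.sum_congr rfl fun b _ => hterm j b]
    rw [Finset.sum_add_distrib, ← Finset.mul_sum, ← Finset.sum_mul,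
      (isPMF_pmap (isPMF_iid hp n) (G j)).2, one_mul]
  rw [show (∑ j : Fin n, ∑ b,
        ((n:ℝ)⁻¹ * pmap (G j) (iid n p) b) * Real.log ((n:ℝ)⁻¹ * pmap (G j) (iid n p) b))
      = ∑ j : Fin n,
        ((n:ℝ)⁻¹ * (∑ b, pmap (G j) (iid n p) b * Real.log (pmap (G j) (iid n p) b))
          + (n:ℝ)⁻¹ * Real.log (n:ℝ)⁻¹) from Finset.sum_congr rfl fun j _ => hline j]
  rw [Finset.sum_add_distrib]
  simp only [Finset.sum_const, Finset.card_univ, Fintype.card_fin, nsmul_eq_mul]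
  rw [← Finset.mul_sum]
  rw [show (n:ℝ) * ((n:ℝ)⁻¹ * Real.log (n:ℝ)⁻¹) = -Real.log n from by
    rw [Real.log_inv, ← mul_assoc, mul_inv_cancel₀ hn']; ring]
  rw [Finset.sum_neg_distrib]
  ring

end Toolkit6
section Toolkit7
set_option linter.unusedSectionVars false
set_option maxHeartbeats 2000000
variable {δ ε : Type*}
variable [Fintype α] [Fintype β] [Fintype γ] [Fintype δ] [Fintype ε]

/-- The key single-letterization identity: for the time-shared auxiliary variable
`U = (J, F(π∘X), trunc J (π∘X))` and single letter `h(X_J)`, the mutual information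
equals `H(F(π∘X)) / n`. -/
lemma MI_timeshare {n : ℕ} (hn : 0 < n) {p : α → ℝ} (hp : IsPMF p) [Nonempty α]
    (π : α → δ) (h : α → ε) (hh : δ → ε) (ph : ε → δ)
    (hhπ : ∀ a, hh (π a) = h a) (hπh : ∀ a, ph (h a) = π a)
    (F : (Fin n → δ) → β) :
    MI (fun w : Fin n × (Fin n → α) => (n:ℝ)⁻¹ * iid n p w.2)
      (fun w => (w.1, F (fun i => π (w.2 i)), trunc (w.1 : ℕ) (fun i => π (w.2 i))))
      (fun w => h (w.2 w.1))
    = Hof (iid n p) (fun x => F (fun i => π (x i))) / n := by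
  have hn' : ((n:ℝ)) ≠ 0 := Nat.cast_ne_zero.2 hn.ne'
  have hδ : Nonempty δ := ⟨π (Classical.arbitrary α)⟩
  have hiidnn : ∀ x, 0 ≤ iid n p x := iid_nonneg hp.1 n
  set A : ℕ → ℝ := fun m =>
    Hof (iid n p) (fun x => (F (fun i => π (x i)), trunc m (fun i => π (x i)))) with hA
  -- the three entropy terms
  have hU : Hof (fun w : Fin n × (Fin n → α) => (n:ℝ)⁻¹ * iid n p w.2)
      (fun w => (w.1, F (fun i => π (w.2 i)), trunc (w.1 : ℕ) (fun i => π (w.2 i))))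
      = Real.log n + (n:ℝ)⁻¹ * ∑ j : Fin n, A (j : ℕ) :=
    Hof_mix hn hp (fun (j : Fin n) (x : Fin n → α) =>
      (F (fun i => π (x i)), trunc (j : ℕ) (fun i => π (x i))))
  have hH : Hof (fun w : Fin n × (Fin n → α) => (n:ℝ)⁻¹ * iid n p w.2)
      (fun w => h (w.2 w.1)) = ent (pmap h p) := by
    unfold Hof
    rw [pmap_mix_snd hn hp h]
  have hJ1 : Hof (fun w : Fin n × (Fin n → α) => (n:ℝ)⁻¹ * iid n p w.2)
      (fun w => ((w.1, F (fun i => π (w.2 i)), trunc (w.1 : ℕ) (fun i => π (w.2 i))),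
        h (w.2 w.1)))
      = Hof (fun w : Fin n × (Fin n → α) => (n:ℝ)⁻¹ * iid n p w.2)
        (fun w => (w.1, F (fun i => π (w.2 i)), trunc (w.1 : ℕ) (fun i => π (w.2 i)),
          h (w.2 w.1))) := by
    exact Hof_congr (p := fun w : Fin n × (Fin n → α) => (n:ℝ)⁻¹ * iid n p w.2)
      (fun w => mul_nonneg (by positivity) (hiidnn w.2))
      (f := fun w : Fin n × (Fin n → α) =>
        ((w.1, F (fun i => π (w.2 i)), trunc (w.1 : ℕ) (fun i => π (w.2 i))), h (w.2 w.1)))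
      (g := fun w : Fin n × (Fin n → α) =>
        (w.1, F (fun i => π (w.2 i)), trunc (w.1 : ℕ) (fun i => π (w.2 i)), h (w.2 w.1)))
      (fun t => (t.1.1, t.1.2.1, t.1.2.2, t.2))
      (fun t => ((t.1, t.2.1, t.2.2.1), t.2.2.2)) (fun w => rfl) (fun w => rfl)
  have hJ : Hof (fun w : Fin n × (Fin n → α) => (n:ℝ)⁻¹ * iid n p w.2)
      (fun w => (w.1, F (fun i => π (w.2 i)), trunc (w.1 : ℕ) (fun i => π (w.2 i)),
        h (w.2 w.1)))
      = Real.log n + (n:ℝ)⁻¹ * ∑ j : Fin n,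
          Hof (iid n p) (fun x => (F (fun i => π (x i)),
            trunc (j : ℕ) (fun i => π (x i)), h (x j))) :=
    Hof_mix hn hp (fun (j : Fin n) (x : Fin n → α) =>
      (F (fun i => π (x i)), trunc (j : ℕ) (fun i => π (x i)), h (x j)))
  -- per-letter joint entropy advances the truncation
  have hstep : ∀ j : Fin n,
      Hof (iid n p) (fun x => (F (fun i => π (x i)),
          trunc (j : ℕ) (fun i => π (x i)), h (x j)))
        = A ((j : ℕ) + 1) := by
    intro j
    rw [hA]
    refine Hof_congr hiidnn
      (fun t => (t.1, fun i : Fin n => if (i : ℕ) < (j : ℕ) then t.2.1 i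
        else if (i : ℕ) = (j : ℕ) then some (ph t.2.2) else none))
      (fun t => (t.1, (fun i : Fin n => if (i : ℕ) < (j : ℕ) then t.2 i else none),
        hh ((t.2 j).getD (Classical.arbitrary δ))))
      (fun x => ?_) (fun x => ?_)
    · refine Prod.ext rfl ?_
      funext i
      simp only [trunc]
      split_ifs <;> first
        | rfl
        | (exfalso; omega)
        | (have hije : i = j := Fin.ext (by omega)
           subst hije
           rw [hπh])
    · refine Prod.ext rfl (Prod.ext ?_ ?_)
      · funext i
        simp only [trunc]
        split_ifs <;> first
          | rfl
          | (exfalso; omega)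
      · simp only [trunc]
        rw [if_pos (by omega)]
        simp only [Option.getD_some]
        rw [hhπ]
  have hA0 : A 0 = Hof (iid n p) (fun x => F (fun i => π (x i))) := by
    rw [hA]
    refine Hof_congr hiidnn Prod.fst (fun b => (b, fun _ : Fin n => none))
      (fun x => rfl) (fun x => ?_)
    refine Prod.ext rfl ?_
    funext i
    simp [trunc]
  have hAn : A n = n * ent (pmap π p) := by
    have e1 : A n = Hof (iid n p) (fun x => fun i => π (x i)) := by
      rw [hA]
      refine Hof_congr hiidnn
        (fun t => fun i : Fin n => (t.2 i).getD (Classical.arbitrary δ))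
        (fun y => (F y, fun i : Fin n => some (y i)))
        (fun x => ?_) (fun x => ?_)
      · funext i
        simp only [trunc]
        rw [if_pos i.isLt]
        simp
      · refine Prod.ext rfl ?_
        funext i
        simp only [trunc]
        rw [if_pos i.isLt]
    rw [e1]
    unfold Hof
    rw [pmap_iid_map n p π, ent_iid (isPMF_pmap hp π) n]
  have hent : ent (pmap h p) = ent (pmap π p) := by
    have : Hof p h = Hof p π := Hof_congr hp.1 ph hh hπh hhπ
    unfold Hof at this
    exact this
  have htel : (∑ j : Fin n, A (j : ℕ)) - (∑ j : Fin n, A ((j : ℕ) + 1))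
      = A 0 - A n := by
    rw [Fin.sum_univ_eq_sum_range (fun m => A m) n,
      Fin.sum_univ_eq_sum_range (fun m => A (m + 1)) n,
      ← Finset.sum_sub_distrib, Finset.sum_range_sub' A n]
  have hJsum : (∑ j : Fin n,
      Hof (iid n p) (fun x => (F (fun i => π (x i)),
        trunc (j : ℕ) (fun i => π (x i)), h (x j))))
      = ∑ j : Fin n, A ((j : ℕ) + 1) := Finset.sum_congr rfl fun j _ => hstep j
  simp only [MI]
  rw [hU, hH, hJ1, hJ, hJsum]
  rw [show Real.log n + (n:ℝ)⁻¹ * ∑ j : Fin n, A (j : ℕ) + ent (pmap h p)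
      - (Real.log n + (n:ℝ)⁻¹ * ∑ j : Fin n, A ((j : ℕ) + 1))
      = ent (pmap h p) + (n:ℝ)⁻¹ *
        ((∑ j : Fin n, A (j : ℕ)) - (∑ j : Fin n, A ((j : ℕ) + 1))) from by ring]
  rw [htel, hent, hAn, hA0]
  field_simp
  ring
end Toolkit7
section Toolkit8
set_option linter.unusedSectionVars false
set_option maxHeartbeats 2000000
variable [Fintype α]

/-- Exchanging the `j`-th letter with an independent copy, when `U` only depends on the
letter through its `S`-coordinates. -/
lemma exchange_letter {υ : Type*} [Fintype υ] {n : ℕ}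
    (p : (∀ k, 𝒳 k) → ℝ) (j : Fin n) (S : Finset (Fin K)) (c : ∀ k, 𝒳 k)
    (U : (Fin n → ∀ k, 𝒳 k) → υ)
    (hU : ∀ x : Fin n → ∀ k, 𝒳 k, restr S (x j) = restr S c →
      U (Function.update x j c) = U x) (b : υ) :
    pmap (fun x : Fin n → ∀ k, 𝒳 k => (U x, x j)) (iid n p) (b, c)
        * pmap (restr S) p (restr S c)
      = pmap (fun x : Fin n → ∀ k, 𝒳 k => (U x, restr S (x j))) (iid n p) (b, restr S c)
        * p c := by
  have hiid : ∀ x : Fin n → ∀ k, 𝒳 k,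
      iid n p (Function.update x j c) * p (x j) = iid n p x * p c := by
    intro x
    unfold iid
    have h1 : (∏ i, p (Function.update x j c i))
        = p c * ∏ i ∈ Finset.univ.erase j, p (x i) := by
      rw [← Finset.mul_prod_erase Finset.univ (fun i => p (Function.update x j c i))
        (Finset.mem_univ j)]
      rw [Function.update_self]
      congr 1
      refine Finset.prod_congr rfl fun i hi => ?_
      rw [Function.update_of_ne (Finset.ne_of_mem_erase hi)]
    have h2 : (∏ i, p (x i)) = p (x j) * ∏ i ∈ Finset.univ.erase j, p (x i) :=
      (Finset.mul_prod_erase Finset.univ (fun i => p (x i)) (Finset.mem_univ j)).symm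
    rw [h1, h2]
    ring
  have hinv : Function.Involutive
      (fun t : (Fin n → ∀ k, 𝒳 k) × (∀ k, 𝒳 k) =>
        (Function.update t.1 j t.2, t.1 j)) := by
    rintro ⟨x, v⟩
    refine Prod.ext ?_ ?_
    · funext i
      rcases eq_or_ne i j with hij | hij
      · subst hij
        simp [Function.update_self]
      · simp [Function.update_of_ne hij]
    · simp [Function.update_self]
  have sum_update_swap : ∀ G : (Fin n → ∀ k, 𝒳 k) → (∀ k, 𝒳 k) → ℝ,
      (∑ x : Fin n → ∀ k, 𝒳 k, ∑ v, G x v)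
        = ∑ x : Fin n → ∀ k, 𝒳 k, ∑ v, G (Function.update x j v) (x j) := by
    intro G
    calc (∑ x : Fin n → ∀ k, 𝒳 k, ∑ v, G x v)
        = ∑ t : (Fin n → ∀ k, 𝒳 k) × (∀ k, 𝒳 k), G t.1 t.2 :=
          (Fintype.sum_prod_type' G).symm
      _ = ∑ t : (Fin n → ∀ k, 𝒳 k) × (∀ k, 𝒳 k),
            G (Function.update t.1 j t.2) (t.1 j) :=
          (Equiv.sum_comp hinv.toPerm (fun t => G t.1 t.2)).symm
      _ = ∑ x : Fin n → ∀ k, 𝒳 k, ∑ v, G (Function.update x j v) (x j) :=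
          Fintype.sum_prod_type'
            (fun x v => G (Function.update x j v) (x j))
  have hpc : (∑ v, @ite ℝ (v = c) (Classical.propDecidable _) (p v) 0) = p c := by
    refine Eq.trans (Fintype.sum_eq_single c ?_) (if_pos rfl)
    intro v hv
    exact if_neg hv
  unfold pmap
  rw [← hpc, Finset.sum_mul_sum, Finset.sum_mul_sum]
  refine Eq.trans (sum_update_swap (fun x v =>
    (@ite ℝ ((U x, x j) = (b, c)) (Classical.propDecidable _) (iid n p x) 0)
      * (@ite ℝ (restr S v = restr S c) (Classical.propDecidable _) (p v) 0))) ?_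
  refine Finset.sum_congr rfl fun x _ => Finset.sum_congr rfl fun v _ => ?_
  beta_reduce
  rcases eq_or_ne v c with hv | hv
  · rw [hv]
    rcases eq_or_ne (restr S (x j)) (restr S c) with hs | hs
    · have hUx := hU x hs
      have hupj : Function.update x j c j = c := Function.update_self j c x
      rcases eq_or_ne (U x) b with hb | hb
      · rw [if_pos (Prod.ext (hUx.trans hb) hupj), if_pos hs,
          if_pos (Prod.ext hb hs), if_pos rfl]
        exact hiid x
      · have h1 : ¬ ((U (Function.update x j c), Function.update x j c j) = (b, c)) := by
          intro hcon
          exact hb (hUx.symm.trans (congrArg Prod.fst hcon))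
        have h2 : ¬ ((U x, restr S (x j)) = (b, restr S c)) := by
          intro hcon
          exact hb (congrArg Prod.fst hcon)
        rw [if_neg h1, if_neg h2, zero_mul, zero_mul]
    · rw [if_neg hs, mul_zero, if_neg, zero_mul]
      intro hcon
      exact hs (congrArg Prod.snd hcon)
  · rw [if_neg hv, mul_zero, if_neg, zero_mul]
    intro hcon
    rw [Function.update_self] at hcon
    exact hv (congrArg Prod.snd hcon)

end Toolkit8
section Toolkit9
set_option linter.unusedSectionVars false
set_option maxHeartbeats 2000000
variable {δ ε : Type*}
variable [Fintype α] [Fintype β] [Fintype γ] [Fintype δ] [Fintype ε]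

lemma pmap_id (p : α → ℝ) : pmap (fun y => y) p = p := by
  funext b
  unfold pmap
  refine Eq.trans (Fintype.sum_eq_single b ?_) (if_pos rfl)
  intro v hv
  exact if_neg hv

lemma MI_pmap (Φ : α → β) (P : α → ℝ) (g : β → γ) (h : β → δ) :
    MI (pmap Φ P) g h = MI P (fun a => g (Φ a)) (fun a => h (Φ a)) := by
  unfold MI Hof
  rw [pmap_comp, pmap_comp, pmap_comp]

end Toolkit9

/-- The auxiliary-variable map of the witness: `U_k = (J, f_k(X_k^n), X_k^{<J})`. -/
noncomputable def PhiMap {K : ℕ} {𝒳 : Fin K → Type} (n : ℕ) (M : Fin K → ℕ)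
    (f : ∀ k, (Fin n → 𝒳 k) → Fin (M k)) :
    Fin n × (Fin n → ∀ k, 𝒳 k) →
      (∀ k, Fin n × Fin (M k) × (Fin n → Option (𝒳 k))) × (∀ k, 𝒳 k) :=
  fun w => (fun k => (w.1, f k (fun i => w.2 i k), trunc (w.1 : ℕ) (fun i => w.2 i k)),
    w.2 w.1)

/-- The `S`-tuple of auxiliary variables as a function of `(j, x)`. -/
noncomputable def USmap {K : ℕ} {𝒳 : Fin K → Type} (n : ℕ) (M : Fin K → ℕ)
    (f : ∀ k, (Fin n → 𝒳 k) → Fin (M k)) (S : Finset (Fin K)) (j : Fin n)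
    (x : Fin n → ∀ k, 𝒳 k) :
    ∀ k : {k // k ∈ S}, Fin n × Fin (M k.1) × (Fin n → Option (𝒳 k.1)) :=
  fun k => (j, f k.1 (fun i => x i k.1), trunc (j : ℕ) (fun i => x i k.1))

section Toolkit9b
set_option linter.unusedSectionVars false
set_option maxHeartbeats 2000000

lemma USmap_update {n : ℕ} {M : Fin K → ℕ} (f : ∀ k, (Fin n → 𝒳 k) → Fin (M k))
    (S : Finset (Fin K)) (j : Fin n) (c : ∀ k, 𝒳 k) (x : Fin n → ∀ k, 𝒳 k)
    (hxc : restr S (x j) = restr S c) :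
    USmap n M f S j (Function.update x j c) = USmap n M f S j x := by
  funext k
  unfold USmap
  have hcol : (fun i => Function.update x j c i k.1) = fun i => x i k.1 := by
    funext i
    rcases eq_or_ne i j with hij | hij
    · subst hij
      rw [Function.update_self]
      exact (congrFun hxc k).symm
    · rw [Function.update_of_ne hij]
  rw [hcol]

lemma markov_core {n : ℕ} (hn : 0 < n) {p : (∀ k, 𝒳 k) → ℝ} (hp : IsPMF p)
    {M : Fin K → ℕ} (f : ∀ k, (Fin n → 𝒳 k) → Fin (M k)) (S : Finset (Fin K))
    (b : ∀ k : {k // k ∈ S}, Fin n × Fin (M k.1) × (Fin n → Option (𝒳 k.1)))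
    (c : ∀ k, 𝒳 k) (s : ∀ k : {k // k ∈ S}, 𝒳 k.1) :
    pmap (fun w : Fin n × (Fin n → ∀ k, 𝒳 k) =>
        (restr S (PhiMap n M f w).1, (PhiMap n M f w).2, restr S (PhiMap n M f w).2))
        (fun w => (n:ℝ)⁻¹ * iid n p w.2) (b, c, s)
      * pmap (fun w : Fin n × (Fin n → ∀ k, 𝒳 k) => restr S (PhiMap n M f w).2)
        (fun w => (n:ℝ)⁻¹ * iid n p w.2) s
    = pmap (fun w : Fin n × (Fin n → ∀ k, 𝒳 k) =>
        (restr S (PhiMap n M f w).1, restr S (PhiMap n M f w).2))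
        (fun w => (n:ℝ)⁻¹ * iid n p w.2) (b, s)
      * pmap (fun w : Fin n × (Fin n → ∀ k, 𝒳 k) =>
        ((PhiMap n M f w).2, restr S (PhiMap n M f w).2))
        (fun w => (n:ℝ)⁻¹ * iid n p w.2) (c, s) := by
  have e1 : pmap (fun w : Fin n × (Fin n → ∀ k, 𝒳 k) =>
        (restr S (PhiMap n M f w).1, (PhiMap n M f w).2, restr S (PhiMap n M f w).2))
        (fun w => (n:ℝ)⁻¹ * iid n p w.2) (b, c, s)
      = ∑ j, (n:ℝ)⁻¹ * pmap (fun x : Fin n → ∀ k, 𝒳 k =>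
          (USmap n M f S j x, x j, restr S (x j))) (iid n p) (b, c, s) :=
    pmap_mix p (fun j x => (USmap n M f S j x, x j, restr S (x j))) (b, c, s)
  have e2 : pmap (fun w : Fin n × (Fin n → ∀ k, 𝒳 k) => restr S (PhiMap n M f w).2)
        (fun w => (n:ℝ)⁻¹ * iid n p w.2) s = pmap (restr S) p s :=
    congrFun (pmap_mix_snd hn hp (restr S)) s
  have e3 : pmap (fun w : Fin n × (Fin n → ∀ k, 𝒳 k) =>
        ((PhiMap n M f w).2, restr S (PhiMap n M f w).2))
        (fun w => (n:ℝ)⁻¹ * iid n p w.2) (c, s)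
      = pmap (fun y : ∀ k, 𝒳 k => (y, restr S y)) p (c, s) :=
    congrFun (pmap_mix_snd hn hp (fun y => (y, restr S y))) (c, s)
  have e3' : pmap (fun y : ∀ k, 𝒳 k => (y, restr S y)) p (c, s)
      = if restr S c = s then p c else 0 := by
    unfold pmap
    refine Eq.trans (Fintype.sum_eq_single c ?_) ?_
    · intro v hv
      exact if_neg fun hcon => hv (congrArg Prod.fst hcon)
    · by_cases hcs : restr S c = s
      · rw [if_pos (show (fun y : ∀ k, 𝒳 k => (y, restr S y)) c = (c, s) from
          Prod.ext rfl hcs), if_pos hcs]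
      · rw [if_neg (show ¬ (fun y : ∀ k, 𝒳 k => (y, restr S y)) c = (c, s) from
          fun hcon => hcs (congrArg Prod.snd hcon)), if_neg hcs]
  have e4 : pmap (fun w : Fin n × (Fin n → ∀ k, 𝒳 k) =>
        (restr S (PhiMap n M f w).1, restr S (PhiMap n M f w).2))
        (fun w => (n:ℝ)⁻¹ * iid n p w.2) (b, s)
      = ∑ j, (n:ℝ)⁻¹ * pmap (fun x : Fin n → ∀ k, 𝒳 k =>
          (USmap n M f S j x, restr S (x j))) (iid n p) (b, s) :=
    pmap_mix p (fun j x => (USmap n M f S j x, restr S (x j))) (b, s)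
  rw [e1, e2, e3, e3', e4, Finset.sum_mul, Finset.sum_mul]
  refine Finset.sum_congr rfl fun j _ => ?_
  rw [mul_assoc, mul_assoc]
  congr 1
  by_cases hcs : restr S c = s
  · subst hcs
    rw [if_pos rfl]
    have hB : pmap (fun x : Fin n → ∀ k, 𝒳 k =>
          (USmap n M f S j x, x j, restr S (x j))) (iid n p) (b, c, restr S c)
        = pmap (fun x : Fin n → ∀ k, 𝒳 k => (USmap n M f S j x, x j)) (iid n p) (b, c) := by
      unfold pmap
      refine Finset.sum_congr rfl fun x _ => ?_
      rcases eq_or_ne (x j) c with hx | hx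
      · by_cases hu : USmap n M f S j x = b
        · rw [if_pos (show (fun x' : Fin n → ∀ k, 𝒳 k =>
                (USmap n M f S j x', x' j, restr S (x' j))) x = (b, c, restr S c) from
              Prod.ext hu (Prod.ext hx (congrArg (restr S) hx))),
            if_pos (show (fun x' : Fin n → ∀ k, 𝒳 k =>
                (USmap n M f S j x', x' j)) x = (b, c) from Prod.ext hu hx)]
        · rw [if_neg fun hcon => hu (congrArg Prod.fst hcon),
            if_neg fun hcon => hu (congrArg Prod.fst hcon)]
      · rw [if_neg fun hcon => hx (congrArg (fun t => t.2.1) hcon),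
          if_neg fun hcon => hx (congrArg Prod.snd hcon)]
    rw [hB]
    exact exchange_letter p j S c (USmap n M f S j)
      (fun x hxc => USmap_update f S j c x hxc) b
  · rw [if_neg hcs, mul_zero]
    have hzero : pmap (fun x : Fin n → ∀ k, 𝒳 k =>
        (USmap n M f S j x, x j, restr S (x j))) (iid n p) (b, c, s) = 0 := by
      unfold pmap
      refine Finset.sum_eq_zero fun x _ => ?_
      refine if_neg fun hcon => hcs ?_
      have h21 : x j = c := congrArg (fun t => t.2.1) hcon
      have h22 : restr S (x j) = s := congrArg (fun t => t.2.2) hcon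
      rw [← h21]
      exact h22
    rw [hzero, zero_mul]

end Toolkit9b
section Toolkit10
set_option linter.unusedSectionVars false
set_option maxHeartbeats 2000000

lemma MI_witness_general {n : ℕ} (hn : 0 < n) {p : (∀ k, 𝒳 k) → ℝ} (hp : IsPMF p)
    [Nonempty (∀ k, 𝒳 k)] {M : Fin K → ℕ} (fc : ∀ k, (Fin n → 𝒳 k) → Fin (M k))
    (T : Finset (Fin K)) {D C B' : Type*} [Fintype D] [Fintype C] [Fintype B']
    (u : (∀ k, Fin n × Fin (M k) × (Fin n → Option (𝒳 k))) → D)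
    (F : (Fin n → (∀ k : {k // k ∈ T}, 𝒳 k.1)) → B')
    (e₁ : D → Fin n × B' × (Fin n → Option (∀ k : {k // k ∈ T}, 𝒳 k.1)))
    (e₂ : Fin n × B' × (Fin n → Option (∀ k : {k // k ∈ T}, 𝒳 k.1)) → D)
    (h₁ : ∀ a : Fin n × (Fin n → ∀ k, 𝒳 k), e₁ (u (PhiMap n M fc a).1)
        = (a.1, F (fun i => restr T (a.2 i)), trunc (a.1 : ℕ) (fun i => restr T (a.2 i))))
    (h₂ : ∀ a : Fin n × (Fin n → ∀ k, 𝒳 k),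
        e₂ (a.1, F (fun i => restr T (a.2 i)), trunc (a.1 : ℕ) (fun i => restr T (a.2 i)))
        = u (PhiMap n M fc a).1)
    (h : (∀ k, 𝒳 k) → C) (hh : (∀ k : {k // k ∈ T}, 𝒳 k.1) → C)
    (ph : C → ∀ k : {k // k ∈ T}, 𝒳 k.1)
    (hh1 : ∀ y, hh (restr T y) = h y) (hh2 : ∀ y, ph (h y) = restr T y) :
    MI (pmap (PhiMap n M fc) (fun w : Fin n × (Fin n → ∀ k, 𝒳 k) => (n:ℝ)⁻¹ * iid n p w.2))
        (fun w => u w.1) (fun w => h w.2)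
      = Hof (iid n p) (fun x => F (fun i => restr T (x i))) / n := by
  refine Eq.trans (MI_pmap (PhiMap n M fc)
    (fun w : Fin n × (Fin n → ∀ k, 𝒳 k) => (n:ℝ)⁻¹ * iid n p w.2)
    (fun w => u w.1) (fun w => h w.2)) ?_
  refine Eq.trans (MI_congr_left
    (p := fun w : Fin n × (Fin n → ∀ k, 𝒳 k) => (n:ℝ)⁻¹ * iid n p w.2)
    (fun w => mul_nonneg (by positivity) (iid_nonneg hp.1 n w.2))
    (f := fun a : Fin n × (Fin n → ∀ k, 𝒳 k) => u (PhiMap n M fc a).1)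
    (f' := fun a : Fin n × (Fin n → ∀ k, 𝒳 k) =>
      (a.1, F (fun i => restr T (a.2 i)), trunc (a.1 : ℕ) (fun i => restr T (a.2 i))))
    (fun a : Fin n × (Fin n → ∀ k, 𝒳 k) => h (a.2 a.1))
    e₁ e₂ h₁ h₂) ?_
  exact MI_timeshare hn hp (restr T) h hh ph hh1 hh2 F

end Toolkit10
/-- **Theorem 3 (multi-source outer bound):** every achievable point lies in `R_o`, and
`R_o ⊆ R_o'`. -/
theorem multi_source_outer_bound (p : (∀ k, 𝒳 k) → ℝ) (hp : IsPMF p) :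
    (∀ (μ : Omega K → ℝ) (R : Fin K → ℝ), AchievableM p μ R → (μ, R) ∈ RoM p) ∧
    RoM p ⊆ RoM' p := by
  refine ⟨?_, RoM_subset_RoM' p⟩
  intro μ R hach
  obtain ⟨n, M, f, hn, hM, hμ⟩ := hach
  haveI hne : Nonempty (∀ k, 𝒳 k) := by
    by_contra hcon
    rw [not_nonempty_iff] at hcon
    have h2 := hp.2
    rw [Finset.univ_eq_empty, Finset.sum_empty] at h2
    exact zero_ne_one h2
  haveI hnex : ∀ k, Nonempty (𝒳 k) := fun k => ⟨Classical.choice hne k⟩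
  have hn' : (0:ℝ) < (n:ℝ) := by exact_mod_cast hn
  refine ⟨fun k => Fin n × Fin (M k) × (Fin n → Option (𝒳 k)), fun k => inferInstance,
    pmap (PhiMap n M f) (fun w : Fin n × (Fin n → ∀ k, 𝒳 k) => (n:ℝ)⁻¹ * iid n p w.2),
    ⟨isPMF_pmap (isPMF_mix hn hp) _, ?_, ?_⟩, ?_, ?_⟩
  · -- X-marginal is p
    calc pmap Prod.snd (pmap (PhiMap n M f)
          (fun w : Fin n × (Fin n → ∀ k, 𝒳 k) => (n:ℝ)⁻¹ * iid n p w.2))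
        = pmap (fun w : Fin n × (Fin n → ∀ k, 𝒳 k) => (PhiMap n M f w).2)
            (fun w : Fin n × (Fin n → ∀ k, 𝒳 k) => (n:ℝ)⁻¹ * iid n p w.2) :=
          pmap_comp _ _ _
      _ = pmap (fun y : ∀ k, 𝒳 k => y) p := pmap_mix_snd hn hp (fun y => y)
      _ = p := pmap_id p
  · -- Markov chains
    intro S
    unfold CondIndep
    intro b c s
    rw [pmap_comp, pmap_comp, pmap_comp, pmap_comp]
    exact markov_core hn hp f S b c s
  · -- rate constraints
    intro k
    haveI hMk : Nonempty (Fin (M k)) := ⟨f k (fun _ => Classical.choice (hnex k))⟩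
    have key : MI (pmap (PhiMap n M f)
          (fun w : Fin n × (Fin n → ∀ k, 𝒳 k) => (n:ℝ)⁻¹ * iid n p w.2))
        (fun w => w.1 k) (fun w => w.2 k)
        = Hof (iid n p) (fun x : Fin n → ∀ k', 𝒳 k' => f k (fun i => x i k)) / n := by
      refine Eq.trans (MI_pmap (PhiMap n M f) _ (fun w => w.1 k) (fun w => w.2 k)) ?_
      exact MI_timeshare hn hp (fun y => y k) (fun y => y k) (fun d => d) (fun d => d)
        (fun a => rfl) (fun a => rfl) (f k)
    rw [key, div_le_iff₀ hn']
    have hcard : Hof (iid n p) (fun x : Fin n → ∀ k', 𝒳 k' => f k (fun i => x i k))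
        ≤ Real.log (M k) := by
      have := ent_le_log_card (isPMF_pmap (isPMF_iid hp n)
        (fun x : Fin n → ∀ k', 𝒳 k' => f k (fun i => x i k)))
      rwa [Fintype.card_fin] at this
    calc Hof (iid n p) (fun x : Fin n → ∀ k', 𝒳 k' => f k (fun i => x i k))
        ≤ Real.log (M k) := hcard
      _ ≤ n * R k := hM k
      _ = R k * n := by ring
  · -- mutual-information constraints
    intro AB
    obtain ⟨kA, hkA⟩ := AB.2.1
    obtain ⟨kB, hkB⟩ := AB.2.2.1
    -- single-set identity, used for both A and B
    have tgen : ∀ (T : Finset (Fin K)) (kT : Fin K), kT ∈ T →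
        MI (pmap (PhiMap n M f)
            (fun w : Fin n × (Fin n → ∀ k, 𝒳 k) => (n:ℝ)⁻¹ * iid n p w.2))
          (fun w => restr T w.1) (fun w => restr T w.2)
        = Hof (iid n p)
            (fun ω : Fin n → ∀ k, 𝒳 k => fun k : {k // k ∈ T} => f k.1 (fun i => ω i k.1))
            / n := by
      intro T kT hkT
      refine MI_witness_general hn hp f T (restr T)
        (fun y : Fin n → ∀ k : {k // k ∈ T}, 𝒳 k.1 =>
          fun k : {k // k ∈ T} => f k.1 (fun i => y i k))
        (fun uu => ((uu ⟨kT, hkT⟩).1, fun k => (uu k).2.1,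
          fun i => if (i : ℕ) < (((uu ⟨kT, hkT⟩).1 : Fin n) : ℕ) then
            some (fun k => ((uu k).2.2 i).getD (Classical.choice (hnex k.1))) else none))
        (fun t => fun k => (t.1, t.2.1 k,
          fun i => Option.map (fun v : ∀ k' : {k // k ∈ T}, 𝒳 k'.1 => v k) (t.2.2 i)))
        ?_ ?_ (restr T) (fun d => d) (fun d => d) (fun y => rfl) (fun y => rfl)
      · intro a
        refine Prod.ext rfl (Prod.ext rfl ?_)
        funext i
        show (if (i : ℕ) < ((a.1 : Fin n) : ℕ) then
            some (fun k : {k // k ∈ T} =>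
              ((trunc (a.1 : ℕ) (fun i' => a.2 i' k.1) i)).getD (Classical.choice (hnex k.1)))
          else none) = trunc (a.1 : ℕ) (fun i' => restr T (a.2 i')) i
        simp only [trunc]
        by_cases hi : (i : ℕ) < ((a.1 : Fin n) : ℕ)
        · rw [if_pos hi, if_pos hi]
          refine congrArg some ?_
          funext k
          rw [if_pos hi]
          rfl
        · rw [if_neg hi, if_neg hi]
      · intro a
        funext k
        refine Prod.ext rfl (Prod.ext rfl ?_)
        funext i
        show Option.map (fun v : ∀ k' : {k // k ∈ T}, 𝒳 k'.1 => v k)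
            (trunc (a.1 : ℕ) (fun i' => restr T (a.2 i')) i)
          = trunc (a.1 : ℕ) (fun i' => a.2 i' k.1) i
        simp only [trunc]
        by_cases hi : (i : ℕ) < ((a.1 : Fin n) : ℕ)
        · rw [if_pos hi, if_pos hi]
          rfl
        · rw [if_neg hi, if_neg hi]
          rfl
    have tA := tgen AB.1.1 kA hkA
    have tB := tgen AB.1.2 kB hkB
    -- joint identity
    have tAB : MI (pmap (PhiMap n M f)
          (fun w : Fin n × (Fin n → ∀ k, 𝒳 k) => (n:ℝ)⁻¹ * iid n p w.2))
        (fun w => (restr AB.1.1 w.1, restr AB.1.2 w.1))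
        (fun w => (restr AB.1.1 w.2, restr AB.1.2 w.2))
        = Hof (iid n p) (fun ω : Fin n → ∀ k, 𝒳 k =>
            ((fun k : {k // k ∈ AB.1.1} => f k.1 (fun i => ω i k.1)),
             (fun k : {k // k ∈ AB.1.2} => f k.1 (fun i => ω i k.1)))) / n := by
      refine MI_witness_general hn hp f (AB.1.1 ∪ AB.1.2)
        (fun uu => (restr AB.1.1 uu, restr AB.1.2 uu))
        (fun y : Fin n → ∀ k : {k // k ∈ AB.1.1 ∪ AB.1.2}, 𝒳 k.1 =>
          ((fun k : {k // k ∈ AB.1.1} =>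
              f k.1 (fun i => y i ⟨k.1, Finset.mem_union_left _ k.2⟩)),
           (fun k : {k // k ∈ AB.1.2} =>
              f k.1 (fun i => y i ⟨k.1, Finset.mem_union_right _ k.2⟩))))
        (fun uu => ((uu.1 ⟨kA, hkA⟩).1, (fun k => (uu.1 k).2.1, fun k => (uu.2 k).2.1),
          fun i => if (i : ℕ) < (((uu.1 ⟨kA, hkA⟩).1 : Fin n) : ℕ) then
            some (fun k : {k // k ∈ AB.1.1 ∪ AB.1.2} =>
              if hk : k.1 ∈ AB.1.1 then
                ((uu.1 ⟨k.1, hk⟩).2.2 i).getD (Classical.choice (hnex k.1))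
              else
                ((uu.2 ⟨k.1, (Finset.mem_union.1 k.2).resolve_left hk⟩).2.2 i).getD
                  (Classical.choice (hnex k.1)))
          else none))
        (fun t => ((fun k : {k // k ∈ AB.1.1} => (t.1, t.2.1.1 k,
            fun i => Option.map
              (fun d : ∀ k' : {k // k ∈ AB.1.1 ∪ AB.1.2}, 𝒳 k'.1 =>
                d ⟨k.1, Finset.mem_union_left _ k.2⟩) (t.2.2 i))),
          (fun k : {k // k ∈ AB.1.2} => (t.1, t.2.1.2 k,
            fun i => Option.map
              (fun d : ∀ k' : {k // k ∈ AB.1.1 ∪ AB.1.2}, 𝒳 k'.1 =>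
                d ⟨k.1, Finset.mem_union_right _ k.2⟩) (t.2.2 i)))))
        ?_ ?_
        (fun y => (restr AB.1.1 y, restr AB.1.2 y))
        (fun d : ∀ k : {k // k ∈ AB.1.1 ∪ AB.1.2}, 𝒳 k.1 =>
          ((fun k : {k // k ∈ AB.1.1} => d ⟨k.1, Finset.mem_union_left _ k.2⟩),
           (fun k : {k // k ∈ AB.1.2} => d ⟨k.1, Finset.mem_union_right _ k.2⟩)))
        (fun t => fun k : {k // k ∈ AB.1.1 ∪ AB.1.2} =>
          if hk : k.1 ∈ AB.1.1 then t.1 ⟨k.1, hk⟩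
          else t.2 ⟨k.1, (Finset.mem_union.1 k.2).resolve_left hk⟩)
        (fun y => rfl) ?_
      · intro a
        refine Prod.ext rfl (Prod.ext rfl ?_)
        funext i
        show (if (i : ℕ) < ((a.1 : Fin n) : ℕ) then
            some (fun k : {k // k ∈ AB.1.1 ∪ AB.1.2} =>
              if hk : k.1 ∈ AB.1.1 then
                ((trunc (a.1 : ℕ) (fun i' => a.2 i' k.1) i)).getD (Classical.choice (hnex k.1))
              else
                ((trunc (a.1 : ℕ) (fun i' => a.2 i' k.1) i)).getD (Classical.choice (hnex k.1)))
          else none)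
          = trunc (a.1 : ℕ) (fun i' => restr (AB.1.1 ∪ AB.1.2) (a.2 i')) i
        simp only [trunc]
        by_cases hi : (i : ℕ) < ((a.1 : Fin n) : ℕ)
        · rw [if_pos hi, if_pos hi]
          refine congrArg some ?_
          funext k
          by_cases hk : k.1 ∈ AB.1.1
          · rw [dif_pos hk, if_pos hi]
            rfl
          · rw [dif_neg hk, if_pos hi]
            rfl
        · rw [if_neg hi, if_neg hi]
      · intro a
        refine Prod.ext ?_ ?_
        · funext k
          refine Prod.ext rfl (Prod.ext rfl ?_)
          funext i
          show Option.map
              (fun d : ∀ k' : {k // k ∈ AB.1.1 ∪ AB.1.2}, 𝒳 k'.1 =>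
                d ⟨k.1, Finset.mem_union_left _ k.2⟩)
              (trunc (a.1 : ℕ) (fun i' => restr (AB.1.1 ∪ AB.1.2) (a.2 i')) i)
            = trunc (a.1 : ℕ) (fun i' => a.2 i' k.1) i
          simp only [trunc]
          by_cases hi : (i : ℕ) < ((a.1 : Fin n) : ℕ)
          · rw [if_pos hi, if_pos hi]
            rfl
          · rw [if_neg hi, if_neg hi]
            rfl
        · funext k
          refine Prod.ext rfl (Prod.ext rfl ?_)
          funext i
          show Option.map
              (fun d : ∀ k' : {k // k ∈ AB.1.1 ∪ AB.1.2}, 𝒳 k'.1 =>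
                d ⟨k.1, Finset.mem_union_right _ k.2⟩)
              (trunc (a.1 : ℕ) (fun i' => restr (AB.1.1 ∪ AB.1.2) (a.2 i')) i)
            = trunc (a.1 : ℕ) (fun i' => a.2 i' k.1) i
          simp only [trunc]
          by_cases hi : (i : ℕ) < ((a.1 : Fin n) : ℕ)
          · rw [if_pos hi, if_pos hi]
            rfl
          · rw [if_neg hi, if_neg hi]
            rfl
      · intro y
        funext k
        beta_reduce
        by_cases hk : k.1 ∈ AB.1.1
        · rw [dif_pos hk]
          rfl
        · rw [dif_neg hk]
          rfl
    rw [tA, tB, tAB]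
    refine le_trans (hμ AB) (le_of_eq ?_)
    simp only [MI]
    ring

end Biclustering
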